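/- For every real δ with 0 < δ < 1, every integer p ≥ 3, and every real τ with τ ≥ g_{p−1}(δ) = 2√δ cos(π/(p−1)), the number H_p(τ,δ) is real and strictly positive. -/
import Mathlib


/-!
Context: given real τ, δ with δ > 0, let λ₁ = (τ + √(τ²−4δ))/2 and
λ₂ = (τ − √(τ²−4δ))/2 (complex principal square root).
H_p(τ,δ) = Σ_{j=1}^{p−1} Σ_{k=1}^{j} λ₁^{k−j} λ₂^{1−k}.
g_q(δ) = 2√δ cos(π/q).
-/

/-- λ₁ = (τ + √(τ²−4δ))/2, using the complex principal square root. -/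
noncomputable def lam1 (τ δ : ℝ) : ℂ :=
  ((τ : ℂ) + ((τ : ℂ) ^ 2 - 4 * (δ : ℂ)) ^ ((1 : ℂ) / 2)) / 2

/-- λ₂ = (τ − √(τ²−4δ))/2, using the complex principal square root. -/
noncomputable def lam2 (τ δ : ℝ) : ℂ :=
  ((τ : ℂ) - ((τ : ℂ) ^ 2 - 4 * (δ : ℂ)) ^ ((1 : ℂ) / 2)) / 2

/-- H_p(τ,δ) = Σ_{j=1}^{p−1} Σ_{k=1}^{j} λ₁^{k−j} λ₂^{1−k}
(indices shifted: j = j'+1, k = k'+1). -/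
noncomputable def Hp (p : ℕ) (τ δ : ℝ) : ℂ :=
  ∑ j ∈ Finset.range (p - 1), ∑ k ∈ Finset.range (j + 1),
    lam1 τ δ ^ ((k : ℤ) - (j : ℤ)) * lam2 τ δ ^ (-(k : ℤ))

lemma lam_add (τ δ : ℝ) : lam1 τ δ + lam2 τ δ = τ := by
  unfold lam1 lam2; ring

lemma sqrt_sq' (τ δ : ℝ) :
    (((τ:ℂ)^2 - 4*(δ:ℂ)) ^ ((1:ℂ)/2))^2 = (τ:ℂ)^2 - 4*(δ:ℂ) := by
  rcases eq_or_ne ((τ:ℂ)^2 - 4*(δ:ℂ)) 0 with h | h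
  · rw [h, Complex.zero_cpow (by norm_num)]; ring
  · rw [sq, ← Complex.cpow_add _ _ h]
    norm_num

lemma lam_mul (τ δ : ℝ) : lam1 τ δ * lam2 τ δ = δ := by
  have h : lam1 τ δ * lam2 τ δ
      = ((τ:ℂ)^2 - (((τ:ℂ)^2 - 4*(δ:ℂ)) ^ ((1:ℂ)/2))^2)/4 := by
    unfold lam1 lam2; ring
  rw [h, sqrt_sq']; ring

noncomputable def useq (τ δ : ℝ) : ℕ → ℝ
  | 0 => 1
  | 1 => τ
  | (n+2) => τ * useq τ δ (n+1) - δ * useq τ δ n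

noncomputable def vseq (τ δ : ℝ) (j : ℕ) : ℂ :=
  ∑ k ∈ Finset.range (j+1), lam1 τ δ ^ k * lam2 τ δ ^ (j - k)

lemma vseq_succ₂ (τ δ : ℝ) (j : ℕ) :
    vseq τ δ (j+1) = lam2 τ δ * vseq τ δ j + lam1 τ δ ^ (j+1) := by
  unfold vseq
  rw [Finset.sum_range_succ, Finset.mul_sum]
  congr 1
  · apply Finset.sum_congr rfl
    intro k hk
    have hk' : k ≤ j := by simpa [Nat.lt_succ_iff] using hk
    have : j + 1 - k = (j - k) + 1 := by omega
    rw [this, pow_succ]; ring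
  · simp

lemma vseq_succ₁ (τ δ : ℝ) (j : ℕ) :
    vseq τ δ (j+1) = lam1 τ δ * vseq τ δ j + lam2 τ δ ^ (j+1) := by
  unfold vseq
  rw [Finset.sum_range_succ', Finset.mul_sum]
  congr 1
  · apply Finset.sum_congr rfl
    intro k hk
    have hk' : k ≤ j := by simpa [Nat.lt_succ_iff] using hk
    have : j + 1 - (k + 1) = j - k := by omega
    rw [this, pow_succ]; ring
  · simp

lemma vseq_eq (τ δ : ℝ) (j : ℕ) : vseq τ δ j = (useq τ δ j : ℂ) := by
  induction j using Nat.twoStepInduction with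
  | zero => simp [vseq, useq]
  | one =>
    simp only [vseq, useq, Finset.sum_range_succ, Finset.sum_range_one]
    rw [add_comm]; simpa using lam_add τ δ
  | more n ih0 ih1 =>
    have h1 := vseq_succ₂ τ δ (n+1)
    have h2 := vseq_succ₂ τ δ n
    have h3 := lam_add τ δ
    have h4 := lam_mul τ δ
    show vseq τ δ (n+2) = ((τ * useq τ δ (n+1) - δ * useq τ δ n : ℝ) : ℂ)
    push_cast
    rw [← ih0, ← ih1]
    linear_combination h1 - lam1 τ δ * h2 + vseq τ δ (n+1) * h3 - vseq τ δ n * h4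

lemma Hp_eq (τ δ : ℝ) (hδ : δ ≠ 0) (p : ℕ) :
    Hp p τ δ = ((∑ j ∈ Finset.range (p - 1), useq τ δ j / δ ^ j : ℝ) : ℂ) := by
  have hδc : (δ : ℂ) ≠ 0 := by exact_mod_cast hδ
  have h1 : lam1 τ δ ≠ 0 := by
    intro h; apply hδc; rw [← lam_mul τ δ, h, zero_mul]
  have h2 : lam2 τ δ ≠ 0 := by
    intro h; apply hδc; rw [← lam_mul τ δ, h, mul_zero]
  unfold Hp
  push_cast
  apply Finset.sum_congr rfl
  intro j _
  have inner : ∀ k ∈ Finset.range (j+1),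
      lam1 τ δ ^ ((k : ℤ) - (j : ℤ)) * lam2 τ δ ^ (-(k : ℤ))
        = lam1 τ δ ^ k * lam2 τ δ ^ (j - k) * ((δ:ℂ) ^ j)⁻¹ := by
    intro k hk
    have hk' : k ≤ j := by simpa [Nat.lt_succ_iff] using hk
    have key : lam1 τ δ ^ ((k : ℤ) - (j : ℤ)) * lam2 τ δ ^ (-(k : ℤ))
        * (lam1 τ δ * lam2 τ δ) ^ (j : ℤ)
        = lam1 τ δ ^ (k : ℤ) * lam2 τ δ ^ ((j : ℤ) - (k : ℤ)) := by
      rw [mul_zpow, mul_mul_mul_comm, ← zpow_add₀ h1, ← zpow_add₀ h2]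
      congr 1 <;> congr 1 <;> ring
    have hδj : ((δ:ℂ)) ^ j ≠ 0 := pow_ne_zero _ hδc
    rw [eq_mul_inv_iff_mul_eq₀ hδj]
    calc lam1 τ δ ^ ((k : ℤ) - (j : ℤ)) * lam2 τ δ ^ (-(k : ℤ)) * (δ:ℂ) ^ j
        = lam1 τ δ ^ ((k : ℤ) - (j : ℤ)) * lam2 τ δ ^ (-(k : ℤ))
            * (lam1 τ δ * lam2 τ δ) ^ (j : ℤ) := by
          rw [lam_mul, zpow_natCast]
      _ = lam1 τ δ ^ (k : ℤ) * lam2 τ δ ^ ((j : ℤ) - (k : ℤ)) := key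
      _ = lam1 τ δ ^ k * lam2 τ δ ^ (j - k) := by
          rw [zpow_natCast, ← zpow_natCast (lam2 τ δ) (j - k)]
          congr 1
          push_cast [Nat.cast_sub hk']
          ring
  rw [Finset.sum_congr rfl inner, ← Finset.sum_mul]
  have : (∑ k ∈ Finset.range (j+1), lam1 τ δ ^ k * lam2 τ δ ^ (j - k))
      = (useq τ δ j : ℂ) := vseq_eq τ δ j
  rw [this]
  push_cast
  ring

-- Case A: real roots, τ ≥ 2√δ
lemma useq_pos_of_big (τ δ : ℝ) (hδ0 : 0 < δ) (hτ : 2 * Real.sqrt δ ≤ τ) :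
    ∀ j, 0 < useq τ δ j ∧ Real.sqrt δ * useq τ δ j ≤ useq τ δ (j+1) := by
  have hs : 0 < Real.sqrt δ := Real.sqrt_pos.2 hδ0
  intro j
  induction j with
  | zero =>
    refine ⟨by norm_num [useq], ?_⟩
    show Real.sqrt δ * 1 ≤ τ
    nlinarith
  | succ n ih =>
    obtain ⟨h0, h1⟩ := ih
    have hpos : 0 < useq τ δ (n+1) := lt_of_lt_of_le (by positivity) h1
    refine ⟨hpos, ?_⟩
    show Real.sqrt δ * useq τ δ (n+1) ≤ τ * useq τ δ (n+1) - δ * useq τ δ n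
    have hsq : Real.sqrt δ * Real.sqrt δ = δ := Real.mul_self_sqrt hδ0.le
    nlinarith [mul_le_mul_of_nonneg_left h1 hs.le]

-- Case B: complex roots; trig formula
lemma useq_sin (τ δ : ℝ) (hδ0 : 0 < δ) (θ : ℝ)
    (hτθ : τ = 2 * Real.sqrt δ * Real.cos θ) :
    ∀ j, useq τ δ j * Real.sin θ
      = Real.sqrt δ ^ j * Real.sin (((j : ℝ) + 1) * θ) := by
  have hsq : Real.sqrt δ ^ 2 = δ := Real.sq_sqrt hδ0.le
  intro j
  induction j using Nat.twoStepInduction with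
  | zero => simp [useq]
  | one =>
    show τ * Real.sin θ = _
    rw [hτθ]
    push_cast
    rw [show ((1:ℝ)+1) * θ = 2 * θ by ring, Real.sin_two_mul]
    ring
  | more n ih0 ih1 =>
    show (τ * useq τ δ (n+1) - δ * useq τ δ n) * Real.sin θ = _
    push_cast at ih0 ih1 ⊢
    have trig : Real.sin (((n:ℝ)+2+1) * θ)
        = 2 * Real.sin (((n:ℝ)+1+1) * θ) * Real.cos θ - Real.sin (((n:ℝ)+1) * θ) := by
      have e1 : ((n:ℝ)+2+1) * θ = ((n:ℝ)+1+1) * θ + θ := by ring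
      have e2 : ((n:ℝ)+1) * θ = ((n:ℝ)+1+1) * θ - θ := by ring
      rw [e1, e2, Real.sin_add, Real.sin_sub]
      ring
    linear_combination τ * ih1 - δ * ih0
      + Real.sqrt δ ^ (n+1) * Real.sin (((n:ℝ)+1+1) * θ) * hτθ
      + Real.sqrt δ ^ n * Real.sin (((n:ℝ)+1) * θ) * hsq
      - Real.sqrt δ ^ (n+2) * trig

lemma sum_useq_pos (δ : ℝ) (hδ0 : 0 < δ) (p : ℕ) (hp : 3 ≤ p)
    (τ : ℝ) (hτ : 2 * Real.sqrt δ * Real.cos (Real.pi / ((p : ℝ) - 1)) ≤ τ) :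
    0 < ∑ j ∈ Finset.range (p - 1), useq τ δ j / δ ^ j := by
  have hs : 0 < Real.sqrt δ := Real.sqrt_pos.2 hδ0
  have hne : (Finset.range (p - 1)).Nonempty := by
    rw [Finset.nonempty_range_iff]; omega
  have hp1 : (2:ℝ) ≤ (p : ℝ) - 1 := by
    have : (3:ℝ) ≤ (p:ℝ) := by exact_mod_cast hp
    linarith
  rcases le_or_gt (2 * Real.sqrt δ) τ with hbig | hsmall
  · apply Finset.sum_pos
    · intro j _
      exact div_pos (useq_pos_of_big τ δ hδ0 hbig j).1 (pow_pos hδ0 j)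
    · exact hne
  · -- complex root case
    set q : ℝ := Real.pi / ((p : ℝ) - 1) with hq
    have hqpos : 0 < q := div_pos Real.pi_pos (by linarith)
    have hqle : q ≤ Real.pi / 2 := by
      rw [hq]
      apply div_le_div_of_nonneg_left Real.pi_pos.le (by norm_num) hp1
    set c : ℝ := τ / (2 * Real.sqrt δ) with hc
    have hc1 : c < 1 := by
      rw [hc, div_lt_one (by positivity)]; linarith
    have hcge : Real.cos q ≤ c := by
      rw [hc, le_div_iff₀ (by positivity)]
      linarith [hτ]
    have hcosq0 : 0 ≤ Real.cos q :=
      Real.cos_nonneg_of_mem_Icc ⟨by linarith [Real.pi_pos], hqle⟩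
    have hcm1 : -1 ≤ c := by linarith
    set θ : ℝ := Real.arccos c with hθ
    have hθcos : Real.cos θ = c := Real.cos_arccos hcm1 hc1.le
    have hθpos : 0 < θ := by
      rw [hθ]; exact Real.arccos_pos.2 hc1
    have hθle : θ ≤ q := by
      have hmono := Real.monotone_arcsin hcge
      have h1 : Real.arccos c ≤ Real.arccos (Real.cos q) := by
        rw [Real.arccos_eq_pi_div_two_sub_arcsin, Real.arccos_eq_pi_div_two_sub_arcsin]
        linarith
      have h2 : Real.arccos (Real.cos q) = q :=
        Real.arccos_cos hqpos.le (by linarith [Real.pi_pos, hqle])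
      rw [hθ]; linarith
    have hτθ : τ = 2 * Real.sqrt δ * Real.cos θ := by
      rw [hθcos, hc]; field_simp
    have hsinθ : 0 < Real.sin θ :=
      Real.sin_pos_of_pos_of_lt_pi hθpos (by nlinarith [Real.pi_pos])
    have key := useq_sin τ δ hδ0 θ hτθ
    apply Finset.sum_pos'
    · intro j hj
      apply div_nonneg _ (pow_pos hδ0 j).le
      have hjlt : j < p - 1 := Finset.mem_range.1 hj
      have hj1 : ((j:ℝ) + 1) ≤ (p:ℝ) - 1 := by
        have : j + 1 ≤ p - 1 := by omega
        have := (Nat.cast_le (α := ℝ)).2 this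
        push_cast at this
        have hcast : ((p - 1 : ℕ) : ℝ) = (p:ℝ) - 1 := by
          have : 1 ≤ p := by omega
          push_cast [Nat.cast_sub this]
          ring
        linarith [hcast ▸ this]
      have hsin : 0 ≤ Real.sin (((j:ℝ) + 1) * θ) := by
        apply Real.sin_nonneg_of_nonneg_of_le_pi
        · positivity
        · calc ((j:ℝ) + 1) * θ ≤ ((p:ℝ) - 1) * θ := by nlinarith
            _ ≤ ((p:ℝ) - 1) * q := by nlinarith
            _ = Real.pi := by rw [hq]; field_simp
      have := key j
      nlinarith [pow_pos hs j]
    · refine ⟨0, Finset.mem_range.2 (by omega), ?_⟩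
      norm_num [useq]

/-- For 0 < δ < 1, p ≥ 3, and τ ≥ g_{p−1}(δ) = 2√δ cos(π/(p−1)),
the number H_p(τ,δ) is real and strictly positive. -/
theorem Hp_pos (δ : ℝ) (hδ0 : 0 < δ) (hδ1 : δ < 1) (p : ℕ) (hp : 3 ≤ p)
    (τ : ℝ) (hτ : 2 * Real.sqrt δ * Real.cos (Real.pi / ((p : ℝ) - 1)) ≤ τ) :
    ∃ r : ℝ, Hp p τ δ = (r : ℂ) ∧ 0 < r :=
  ⟨∑ j ∈ Finset.range (p - 1), useq τ δ j / δ ^ j,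
    Hp_eq τ δ hδ0.ne' p, sum_useq_pos δ hδ0 p hp τ hτ⟩
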